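/- If G is a graph of order n with at least one vertex, then γ_R(G) ≤ n − Δ(G) + 1, where Δ(G) is the maximum degree of G. -/

import Mathlib

open SimpleGraph Finset

/-- A Roman dominating function: values in {0,1,2}, every 0-vertex has a neighbor with value 2. -/
def IsRDF {V : Type*} (G : SimpleGraph V) (f : V → ℕ) : Prop :=
  (∀ v, f v ≤ 2) ∧ ∀ v, f v = 0 → ∃ u, G.Adj v u ∧ f u = 2

/-- The Roman domination number: minimum weight of a Roman dominating function. -/
noncomputable def romanDom {V : Type*} [Fintype V] (G : SimpleGraph V) : ℕ :=
  sInf {k | ∃ f : V → ℕ, IsRDF G f ∧ ∑ v, f v = k}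

/-- A dominating set. -/
def IsDomSet {V : Type*} (G : SimpleGraph V) (S : Set V) : Prop :=
  ∀ v, v ∈ S ∨ ∃ u ∈ S, G.Adj u v

/-- The domination number. -/
noncomputable def domNum {V : Type*} [Fintype V] (G : SimpleGraph V) : ℕ :=
  sInf {k | ∃ S : Set V, IsDomSet G S ∧ S.ncard = k}

/-- Degree of a vertex. -/
noncomputable def deg {V : Type*} (G : SimpleGraph V) (v : V) : ℕ :=
  (G.neighborSet v).ncard

/-- Maximum degree. -/
noncomputable def maxDeg {V : Type*} (G : SimpleGraph V) : ℕ :=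
  sSup {d | ∃ v, deg G v = d}

/-- Minimum degree. -/
noncomputable def minDeg {V : Type*} (G : SimpleGraph V) : ℕ :=
  sInf {d | ∃ v, deg G v = d}

/-- The Roman bondage number: minimum size of an edge set whose deletion increases `romanDom`. -/
noncomputable def romanBondage {V : Type*} [Fintype V] (G : SimpleGraph V) : ℕ :=
  sInf {k | ∃ B : Set (Sym2 V), B ⊆ G.edgeSet ∧
    romanDom (G.deleteEdges B) > romanDom G ∧ B.ncard = k}

/-- The bondage number: minimum size of an edge set whose deletion increases `domNum`. -/
noncomputable def bondage {V : Type*} [Fintype V] (G : SimpleGraph V) : ℕ :=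
  sInf {k | ∃ B : Set (Sym2 V), B ⊆ G.edgeSet ∧
    domNum (G.deleteEdges B) > domNum G ∧ B.ncard = k}

/-- A vertex cover. -/
def IsVC {V : Type*} (G : SimpleGraph V) (S : Set V) : Prop :=
  ∀ u v, G.Adj u v → u ∈ S ∨ v ∈ S

/-- The vertex covering number. -/
noncomputable def vcNum {V : Type*} [Fintype V] (G : SimpleGraph V) : ℕ :=
  sInf {k | ∃ S : Set V, IsVC G S ∧ S.ncard = k}

theorem stmt2 {V : Type*} [Fintype V] [Nonempty V] (G : SimpleGraph V) :
    romanDom G ≤ Fintype.card V - maxDeg G + 1 := by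
  classical
  have hdeg : ∀ w : V, deg G w = (G.neighborFinset w).card := by
    intro w; simp [deg, ← Set.ncard_coe_finset, SimpleGraph.neighborFinset]
  have hne : {d | ∃ v, deg G v = d}.Nonempty :=
    ⟨deg G (Classical.arbitrary V), Classical.arbitrary V, rfl⟩
  have hbdd : BddAbove {d | ∃ v, deg G v = d} := by
    refine ⟨Fintype.card V, ?_⟩
    rintro d ⟨w, rfl⟩
    rw [hdeg]
    exact Finset.card_le_card (Finset.subset_univ _) |>.trans_eq (by simp)
  obtain ⟨v, hv⟩ : ∃ v, deg G v = maxDeg G := Nat.sSup_mem hne hbdd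
  set f : V → ℕ := fun u => if u = v then 2 else if G.Adj v u then 0 else 1 with hf
  have hRDF : IsRDF G f := by
    constructor
    · intro u; simp only [hf]; split <;> [omega; (split <;> omega)]
    · intro u hu
      simp only [hf] at hu
      by_cases h1 : u = v
      · simp [h1] at hu
      · simp only [h1, if_false] at hu
        by_cases h2 : G.Adj v u
        · exact ⟨v, h2.symm, by simp [hf]⟩
        · simp [h2] at hu
  have hsub : G.neighborFinset v ⊆ Finset.univ.erase v := by
    intro u hu
    simp only [SimpleGraph.mem_neighborFinset] at hu
    exact Finset.mem_erase.2 ⟨fun h => G.loopless.irrefl v (h ▸ hu), Finset.mem_univ _⟩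
  have hsum : ∑ u, f u = Fintype.card V - maxDeg G + 1 := by
    rw [← Finset.sum_erase_add _ _ (Finset.mem_univ v)]
    have h2 : f v = 2 := by simp [hf]
    have hrest : ∑ u ∈ Finset.univ.erase v, f u
        = ((Finset.univ.erase v) \ G.neighborFinset v).card := by
      rw [Finset.card_eq_sum_ones]
      rw [← Finset.sum_subset (Finset.sdiff_subset) (fun u hu hnu => ?_)]
      · apply Finset.sum_congr rfl
        intro u hu
        simp only [Finset.mem_sdiff, Finset.mem_erase, SimpleGraph.mem_neighborFinset] at hu
        simp [hf, hu.1.1, hu.2]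
      · simp only [Finset.mem_sdiff, Finset.mem_erase, SimpleGraph.mem_neighborFinset,
          not_and, not_not] at hu hnu
        simp [hf, hu.1, hnu hu]
    have hcard : ((Finset.univ.erase v) \ G.neighborFinset v).card
        = Fintype.card V - 1 - deg G v := by
      rw [Finset.card_sdiff_of_subset hsub, Finset.card_erase_of_mem (Finset.mem_univ v),
        Finset.card_univ, hdeg]
    have hle : deg G v ≤ Fintype.card V - 1 := by
      rw [hdeg]
      have := Finset.card_le_card hsub
      rwa [Finset.card_erase_of_mem (Finset.mem_univ v), Finset.card_univ] at this
    have hpos : 1 ≤ Fintype.card V := Fintype.card_pos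
    rw [hrest, h2, hcard, hv.symm]
    omega
  exact Nat.sInf_le ⟨f, hRDF, hsum⟩
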